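/- Let F(θ) = ∫_0^θ log(2·sin(πt)) dt for θ ∈ [0,1]. Then F attains its maximum on [0,1] at θ = 5/6; that is, F(θ) ≤ F(5/6) for all θ ∈ [0,1], with equality only at θ = 5/6. -/

import Mathlib

open Real

open MeasureTheory intervalIntegral Set


noncomputable def gg (t : ℝ) : ℝ := Real.log (2 * Real.sin (Real.pi * t))

lemma intLog01 : IntervalIntegrable Real.log volume 0 1 := by
  have hmaj : IntervalIntegrable (fun x : ℝ => 2 * x ^ (-(1:ℝ)/2)) volume 0 1 :=
    (intervalIntegrable_rpow' (by norm_num)).const_mul 2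
  refine hmaj.mono_fun Real.measurable_log.aestronglyMeasurable ?_
  rw [uIoc_of_le (by norm_num : (0:ℝ) ≤ 1)]
  refine (ae_restrict_iff' measurableSet_Ioc).2 (Filter.Eventually.of_forall ?_)
  intro x hx
  have hx0 : 0 < x := hx.1
  have hx1 : x ≤ 1 := hx.2
  have hrp : (0:ℝ) < x ^ (-(1:ℝ)/2) := Real.rpow_pos_of_pos hx0 _
  have h1 : Real.log (x ^ (-(1:ℝ)/2)) = (-(1:ℝ)/2) * Real.log x := Real.log_rpow hx0 _
  have h2 : Real.log (x ^ (-(1:ℝ)/2)) ≤ x ^ (-(1:ℝ)/2) - 1 :=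
    Real.log_le_sub_one_of_pos hrp
  have hlogle : Real.log x ≤ 0 := Real.log_nonpos hx0.le hx1
  simp only [Real.norm_eq_abs]
  rw [abs_of_nonpos hlogle, abs_of_nonneg (by positivity)]
  nlinarith

lemma gg_meas : Measurable gg := by
  unfold gg
  exact Real.measurable_log.comp ((measurable_const.mul (Real.measurable_sin.comp
    (measurable_const.mul measurable_id))))

lemma intGGhalf : IntervalIntegrable gg volume 0 (1/2) := by
  have hlog : IntervalIntegrable Real.log volume 0 (1/2) :=
    intLog01.mono_set (by rw [uIcc_of_le (by norm_num : (0:ℝ) ≤ 1/2),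
      uIcc_of_le (by norm_num : (0:ℝ) ≤ 1)]; exact Icc_subset_Icc le_rfl (by norm_num))
  refine hlog.mono_fun gg_meas.aestronglyMeasurable ?_
  rw [uIoc_of_le (by norm_num : (0:ℝ) ≤ 1/2)]
  refine (ae_restrict_iff' measurableSet_Ioc).2 (Filter.Eventually.of_forall ?_)
  intro x hx
  have hx0 : 0 < x := hx.1
  have hx1 : x ≤ 1/2 := hx.2
  have hsin : 2 * x ≤ Real.sin (Real.pi * x) := by
    have := Real.mul_le_sin (x := Real.pi * x) (by positivity) (by nlinarith [Real.pi_pos])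
    have hpi := Real.pi_pos
    calc 2 * x = 2 / Real.pi * (Real.pi * x) := by field_simp
    _ ≤ Real.sin (Real.pi * x) := this
  have hub : 2 * Real.sin (Real.pi * x) ≤ 2 := by nlinarith [Real.sin_le_one (Real.pi * x)]
  have hpos : (0:ℝ) < 4 * x := by linarith
  have hlow : Real.log (4 * x) ≤ gg x := by
    unfold gg; exact Real.log_le_log (by positivity) (by linarith)
  have hup : gg x ≤ Real.log 2 := by
    unfold gg
    exact Real.log_le_log (by nlinarith) hub
  have hlogx : Real.log x ≤ 0 := Real.log_nonpos hx0.le (by linarith)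
  simp only [Real.norm_eq_abs]
  rw [abs_of_nonpos hlogx]
  refine abs_le.2 ⟨?_, ?_⟩
  · have : Real.log x ≤ Real.log (4 * x) := Real.log_le_log hx0 (by linarith)
    linarith
  · have h2x : Real.log 2 + Real.log x = Real.log (2 * x) := (Real.log_mul (by norm_num) hx0.ne').symm
    have : Real.log (2 * x) ≤ 0 := Real.log_nonpos (by positivity) (by linarith)
    linarith

lemma gg_symm (x : ℝ) : gg (1 - x) = gg x := by
  unfold gg
  rw [mul_sub, mul_one, Real.sin_pi_sub]

lemma intGG01 : IntervalIntegrable gg volume 0 1 := by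
  have h2 : IntervalIntegrable gg volume (1/2) 1 := by
    have := intGGhalf.comp_sub_left 1
    simp only [gg_symm] at this
    norm_num at this
    exact this.symm
  exact intGGhalf.trans h2

lemma intGG {a b : ℝ} (ha : 0 ≤ a) (ha1 : a ≤ 1) (hb : 0 ≤ b) (hb1 : b ≤ 1) :
    IntervalIntegrable gg volume a b := by
  refine intGG01.mono_set ?_
  rw [uIcc_of_le (by norm_num : (0:ℝ) ≤ 1)]
  exact uIcc_subset_Icc ⟨ha, ha1⟩ ⟨hb, hb1⟩

lemma chord0 {t : ℝ} (h1 : 0 ≤ t) (h2 : t ≤ 1/6) : 3 * t ≤ Real.sin (Real.pi * t) := by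
  have hpi := Real.pi_pos
  have key := strictConcaveOn_sin_Icc.concaveOn.2
    (mem_Icc.2 ⟨le_rfl, hpi.le⟩ : (0:ℝ) ∈ Icc 0 Real.pi)
    (mem_Icc.2 ⟨by positivity, by linarith⟩ : Real.pi/6 ∈ Icc 0 Real.pi)
    (by linarith : (0:ℝ) ≤ 1 - 6*t) (by linarith : (0:ℝ) ≤ 6*t) (by ring)
  rw [smul_eq_mul, smul_eq_mul, smul_eq_mul, smul_eq_mul, Real.sin_zero] at key
  have harg : (1 - 6*t) * 0 + 6*t * (Real.pi/6) = Real.pi * t := by ring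
  rw [harg, Real.sin_pi_div_six] at key
  linarith

lemma chord1 {t : ℝ} (h1 : 1/6 ≤ t) (h2 : t ≤ 1/2) : 3/2 * t + 1/4 ≤ Real.sin (Real.pi * t) := by
  have hpi := Real.pi_pos
  have key := strictConcaveOn_sin_Icc.concaveOn.2
    (mem_Icc.2 ⟨by positivity, by linarith⟩ : Real.pi/6 ∈ Icc 0 Real.pi)
    (mem_Icc.2 ⟨by positivity, by linarith⟩ : Real.pi/2 ∈ Icc 0 Real.pi)
    (by linarith : (0:ℝ) ≤ 3/2 - 3*t) (by linarith : (0:ℝ) ≤ 3*t - 1/2) (by ring)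
  rw [smul_eq_mul, smul_eq_mul, smul_eq_mul, smul_eq_mul] at key
  have harg : (3/2 - 3*t) * (Real.pi/6) + (3*t - 1/2) * (Real.pi/2) = Real.pi * t := by ring
  rw [harg, Real.sin_pi_div_six, Real.sin_pi_div_two] at key
  linarith

lemma sin_five_pi_div_six : Real.sin (5 * Real.pi / 6) = 1/2 := by
  have : 5 * Real.pi / 6 = Real.pi - Real.pi / 6 := by ring
  rw [this, Real.sin_pi_sub, Real.sin_pi_div_six]

lemma chord2 {t : ℝ} (h1 : 1/2 ≤ t) (h2 : t ≤ 5/6) : 7/4 - 3/2 * t ≤ Real.sin (Real.pi * t) := by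
  have hpi := Real.pi_pos
  have key := strictConcaveOn_sin_Icc.concaveOn.2
    (mem_Icc.2 ⟨by positivity, by linarith⟩ : Real.pi/2 ∈ Icc 0 Real.pi)
    (mem_Icc.2 ⟨by positivity, by linarith⟩ : 5 * Real.pi / 6 ∈ Icc 0 Real.pi)
    (by linarith : (0:ℝ) ≤ 5/2 - 3*t) (by linarith : (0:ℝ) ≤ 3*t - 3/2) (by ring)
  rw [smul_eq_mul, smul_eq_mul, smul_eq_mul, smul_eq_mul] at key
  have harg : (5/2 - 3*t) * (Real.pi/2) + (3*t - 3/2) * (5 * Real.pi / 6) = Real.pi * t := by ring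
  rw [harg, Real.sin_pi_div_two, sin_five_pi_div_six] at key
  linarith

lemma int_log_from_zero {b : ℝ} (hb : 0 ≤ b) (hb1 : b ≤ 1) :
    ∫ t in (0:ℝ)..b, Real.log t = b * Real.log b - b := by
  rcases hb.eq_or_lt with rfl | hb0
  · simp
  have hcont : ContinuousOn (fun t : ℝ => t * Real.log t - t) (Icc 0 b) :=
    (Real.continuous_mul_log.sub continuous_id).continuousOn
  have hderiv : ∀ x ∈ Ioo (0:ℝ) b,
      HasDerivWithinAt (fun t : ℝ => t * Real.log t - t) (Real.log x) (Ioi x) x := by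
    intro x hx
    have h := (Real.hasDerivAt_mul_log hx.1.ne').sub (hasDerivAt_id x)
    have heq : Real.log x + 1 - 1 = Real.log x := by ring
    rw [heq] at h
    exact h.hasDerivWithinAt
  have hsub : Icc (0:ℝ) b ⊆ Icc (0:ℝ) 1 := Icc_subset_Icc le_rfl hb1
  have hint : IntervalIntegrable Real.log volume 0 b := by
    refine intLog01.mono_set ?_
    rw [uIcc_of_le hb, uIcc_of_le (by norm_num : (0:ℝ) ≤ 1)]
    exact hsub
  have h := integral_eq_sub_of_hasDeriv_right_of_le hb hcont hderiv hint
  simpa using h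

lemma I1_val : ∫ t in (0:ℝ)..(1/6), (Real.log 6 + Real.log t) = -(1/6) := by
  have hsub : Icc (0:ℝ) (1/6) ⊆ Icc (0:ℝ) 1 := Icc_subset_Icc le_rfl (by norm_num)
  have hlogint : IntervalIntegrable Real.log volume 0 (1/6) := by
    refine intLog01.mono_set ?_
    rw [uIcc_of_le (by norm_num : (0:ℝ) ≤ 1/6), uIcc_of_le (by norm_num : (0:ℝ) ≤ 1)]
    exact hsub
  rw [intervalIntegral.integral_add intervalIntegrable_const hlogint,
    intervalIntegral.integral_const, int_log_from_zero (by norm_num) (by norm_num)]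
  have h6 : Real.log (1/6) = - Real.log 6 := by
    rw [one_div, Real.log_inv]
  rw [h6]
  simp only [smul_eq_mul]
  ring

lemma I2_val : ∫ t in (1/6:ℝ)..(1/2), Real.log (3 * t + 1/2) = (2 * Real.log 2 - 1) / 3 := by
  rw [intervalIntegral.integral_comp_mul_add Real.log (by norm_num : (3:ℝ) ≠ 0) (1/2)]
  norm_num
  ring

lemma I3_val : ∫ t in (1/2:ℝ)..(5/6), Real.log (7/2 - 3 * t) = (2 * Real.log 2 - 1) / 3 := by
  have heq : (fun t : ℝ => Real.log (7/2 - 3 * t)) = fun t : ℝ => Real.log (-3 * t + 7/2) := by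
    funext t; ring_nf
  rw [show (∫ t in (1/2:ℝ)..(5/6), Real.log (7/2 - 3 * t))
      = ∫ t in (1/2:ℝ)..(5/6), Real.log (-3 * t + 7/2) from by rw [heq]]
  rw [intervalIntegral.integral_comp_mul_add Real.log (by norm_num : (-3:ℝ) ≠ 0) (7/2)]
  norm_num
  ring

lemma FposMain : 0 < ∫ t in (0:ℝ)..(5/6), gg t := by
  have hlogint : IntervalIntegrable Real.log volume 0 (1/6) := by
    refine intLog01.mono_set ?_
    rw [uIcc_of_le (by norm_num : (0:ℝ) ≤ 1/6), uIcc_of_le (by norm_num : (0:ℝ) ≤ 1)]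
    exact Icc_subset_Icc le_rfl (by norm_num)
  -- part 1
  have hP1 : -(1/6 : ℝ) ≤ ∫ t in (0:ℝ)..(1/6), gg t := by
    rw [← I1_val]
    refine intervalIntegral.integral_mono_ae_restrict (by norm_num)
      (intervalIntegrable_const.add hlogint)
      (intGG (by norm_num) (by norm_num) (by norm_num) (by norm_num)) ?_
    have h0 : ∀ᵐ x ∂(volume.restrict (Icc (0:ℝ) (1/6))), x ≠ 0 := by
      refine ae_restrict_of_ae ?_
      have : ({(0:ℝ)} : Set ℝ) =ᵐ[volume] (∅ : Set ℝ) := by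
        simp [ae_eq_empty, Real.volume_singleton]
      refine (MeasureTheory.ae_iff).2 ?_
      simp
    filter_upwards [h0, ae_restrict_mem measurableSet_Icc] with x hx0 hxI
    have hxpos : 0 < x := lt_of_le_of_ne hxI.1 (Ne.symm hx0)
    have hx6 : x ≤ 1/6 := hxI.2
    have hchord := chord0 hxpos.le hx6
    have hlog6x : Real.log 6 + Real.log x = Real.log (6 * x) :=
      (Real.log_mul (by norm_num) hx0).symm
    rw [hlog6x]
    unfold gg
    exact Real.log_le_log (by positivity) (by linarith)
  -- part 2
  have hP2 : (2 * Real.log 2 - 1) / 3 ≤ ∫ t in (1/6:ℝ)..(1/2), gg t := by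
    rw [← I2_val]
    have hcont : ContinuousOn (fun t : ℝ => Real.log (3 * t + 1/2)) (uIcc (1/6 : ℝ) (1/2)) := by
      apply ContinuousOn.log
      · fun_prop
      · intro x hx
        rw [uIcc_of_le (by norm_num : (1/6:ℝ) ≤ 1/2)] at hx
        have := hx.1
        positivity
    refine intervalIntegral.integral_mono_on (by norm_num)
      hcont.intervalIntegrable
      (intGG (by norm_num) (by norm_num) (by norm_num) (by norm_num)) ?_
    intro x hx
    have hchord := chord1 hx.1 hx.2
    unfold gg
    refine Real.log_le_log (by nlinarith [hx.1]) (by linarith)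
  -- part 3
  have hP3 : (2 * Real.log 2 - 1) / 3 ≤ ∫ t in (1/2:ℝ)..(5/6), gg t := by
    rw [← I3_val]
    have hcont : ContinuousOn (fun t : ℝ => Real.log (7/2 - 3 * t)) (uIcc (1/2 : ℝ) (5/6)) := by
      apply ContinuousOn.log
      · fun_prop
      · intro x hx
        rw [uIcc_of_le (by norm_num : (1/2:ℝ) ≤ 5/6)] at hx
        have := hx.2
        nlinarith
    refine intervalIntegral.integral_mono_on (by norm_num)
      hcont.intervalIntegrable
      (intGG (by norm_num) (by norm_num) (by norm_num) (by norm_num)) ?_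
    intro x hx
    have hchord := chord2 hx.1 hx.2
    unfold gg
    refine Real.log_le_log (by nlinarith [hx.2]) (by linarith)
  have hsplit : (∫ t in (0:ℝ)..(5/6), gg t)
      = (∫ t in (0:ℝ)..(1/6), gg t) + (∫ t in (1/6:ℝ)..(1/2), gg t)
        + (∫ t in (1/2:ℝ)..(5/6), gg t) := by
    rw [intervalIntegral.integral_add_adjacent_intervals
        (intGG (by norm_num) (by norm_num) (by norm_num) (by norm_num))
        (intGG (by norm_num) (by norm_num) (by norm_num) (by norm_num)),
      intervalIntegral.integral_add_adjacent_intervals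
        (intGG (by norm_num) (by norm_num) (by norm_num) (by norm_num))
        (intGG (by norm_num) (by norm_num) (by norm_num) (by norm_num))]
  have hlog2 : (0.6931471803 : ℝ) < Real.log 2 := Real.log_two_gt_d9
  rw [hsplit]
  nlinarith

lemma gg_nonpos {t : ℝ} (h0 : 0 ≤ t) (h6 : t ≤ 1/6) : gg t ≤ 0 := by
  have hpi := Real.pi_pos
  have hmem1 : Real.pi * t ∈ Icc (-(Real.pi/2)) (Real.pi/2) := by
    constructor <;> nlinarith
  have hmem2 : Real.pi / 6 ∈ Icc (-(Real.pi/2)) (Real.pi/2) := by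
    constructor <;> nlinarith
  have hsin : Real.sin (Real.pi * t) ≤ Real.sin (Real.pi / 6) :=
    Real.strictMonoOn_sin.monotoneOn hmem1 hmem2 (by nlinarith)
  rw [Real.sin_pi_div_six] at hsin
  unfold gg
  have hc := chord0 h0 h6
  refine Real.log_nonpos (by linarith) (by linarith)

lemma gg_pos {t : ℝ} (h1 : 1/6 < t) (h2 : t < 5/6) : 0 < gg t := by
  unfold gg
  refine Real.log_pos ?_
  rcases le_or_gt t (1/2) with h | h
  · have := chord1 h1.le h
    linarith
  · have := chord2 h.le h2.le
    linarith

lemma gg_neg_high {t : ℝ} (h1 : 5/6 < t) (h2 : t < 1) : gg t < 0 := by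
  have hpi := Real.pi_pos
  have hs : Real.sin (Real.pi * t) = Real.sin (Real.pi * (1 - t)) := by
    rw [mul_sub, mul_one, Real.sin_pi_sub]
  have hmem1 : Real.pi * (1 - t) ∈ Icc (-(Real.pi/2)) (Real.pi/2) := by
    constructor <;> nlinarith
  have hmem2 : Real.pi / 6 ∈ Icc (-(Real.pi/2)) (Real.pi/2) := by
    constructor <;> nlinarith
  have hlt : Real.sin (Real.pi * (1 - t)) < Real.sin (Real.pi / 6) :=
    Real.strictMonoOn_sin hmem1 hmem2 (by nlinarith)
  rw [Real.sin_pi_div_six] at hlt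
  have hposs : 0 < Real.sin (Real.pi * (1 - t)) :=
    Real.sin_pos_of_pos_of_lt_pi (by nlinarith) (by nlinarith)
  unfold gg
  refine Real.log_neg (by rw [hs]; linarith) (by rw [hs]; linarith)

/-- The function `F(θ) = ∫_0^θ log(2 sin(πt)) dt` attains its
maximum on `[0,1]` at `θ = 5/6`, and only there. -/
theorem stmt4 (F : ℝ → ℝ)
    (hF : ∀ θ : ℝ, F θ = ∫ t in (0 : ℝ)..θ, Real.log (2 * Real.sin (Real.pi * t))) :
    ∀ θ : ℝ, 0 ≤ θ → θ ≤ 1 →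
      F θ ≤ F (5 / 6) ∧ (F θ = F (5 / 6) → θ = 5 / 6) := by

  have hFeq : ∀ x : ℝ, F x = ∫ t in (0:ℝ)..x, gg t := hF
  have key : ∀ a b : ℝ, 0 ≤ a → a ≤ b → b ≤ 1 → F b - F a = ∫ t in a..b, gg t := by
    intro a b ha hab hb1
    have h := intervalIntegral.integral_add_adjacent_intervals
      (intGG le_rfl (by norm_num) ha (by linarith))
      (intGG ha (by linarith) (by linarith) hb1)
    rw [hFeq a, hFeq b]
    linarith
  have hFpos : 0 < F (5/6) := by rw [hFeq]; exact FposMain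
  intro θ h0 h1
  rcases le_or_gt θ (1/6) with hA | hB
  · have hFθ : F θ ≤ 0 := by
      rw [hFeq]
      have h := intervalIntegral.integral_mono_on (μ := volume) (g := fun _ => (0:ℝ)) h0
        (intGG le_rfl (by norm_num) h0 h1) intervalIntegrable_const
        (fun x hx => gg_nonpos hx.1 (le_trans hx.2 hA))
      simpa using h
    exact ⟨by linarith, fun hEq => by linarith⟩
  rcases lt_trichotomy θ (5/6) with hB1 | hB2 | hB3
  · have hdiff : F (5/6) - F θ = ∫ t in θ..(5/6:ℝ), gg t := key θ (5/6) h0 hB1.le (by norm_num)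
    have hpos : 0 < ∫ t in θ..(5/6:ℝ), gg t :=
      intervalIntegral_pos_of_pos_on (intGG h0 h1 (by norm_num) (by norm_num))
        (fun x hx => gg_pos (lt_trans hB hx.1) hx.2) hB1
    exact ⟨by linarith, fun hEq => by rw [hEq] at hdiff; exfalso; simp at hdiff; linarith⟩
  · exact ⟨le_of_eq (by rw [hB2]), fun _ => hB2⟩
  · have hdiff : F θ - F (5/6) = ∫ t in (5/6:ℝ)..θ, gg t := key (5/6) θ (by norm_num) hB3.le h1
    have hpos : 0 < ∫ t in (5/6:ℝ)..θ, (- gg t) :=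
      intervalIntegral_pos_of_pos_on ((intGG (by norm_num) (by norm_num) h0 h1).neg)
        (fun x hx => neg_pos.2 (gg_neg_high hx.1 (lt_of_lt_of_le hx.2 h1))) hB3
    rw [intervalIntegral.integral_neg] at hpos
    exact ⟨by linarith, fun hEq => by exfalso; linarith⟩
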